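/- Let (u, ρ) be a smooth periodic solution of the μ-Hunter–Saxton system −u_{txx} = 2μ(u)u_x − 2u_x u_{xx} − u u_{xxx} + ρρ_x − γ₁ u_{xxx}, ρ_t = (ρu)_x + 2γ₂ ρ_x on S = R/Z. Then d/dt ∫_S (u_x² + ρ²) dx = 0, i.e. E(t) = ∫_S (u_x(t,x)² + ρ(t,x)²) dx is conserved. -/

import Mathlib

open MeasureTheory intervalIntegral

/-- If `f` is spatially 1-periodic and has spatial derivative `f'`, then `f'` is periodic. -/
lemma periodic_x_deriv (f f' : ℝ → ℝ → ℝ)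
    (hp : ∀ t x : ℝ, f t (x + 1) = f t x)
    (hd : ∀ t x : ℝ, HasDerivAt (fun y => f t y) (f' t x) x) :
    ∀ t x : ℝ, f' t (x + 1) = f' t x := by
  intro t x
  have h1 : HasDerivAt (fun y => f t (y + 1)) (f' t (x + 1) * 1) x :=
    (hd t (x + 1)).comp x ((hasDerivAt_id x).add_const 1)
  have h2 : HasDerivAt (fun y => f t y) (f' t (x + 1) * 1) x := by
    have hfe : (fun y => f t (y + 1)) = fun y => f t y := funext (hp t)
    rwa [hfe] at h1
  have := h2.unique (hd t x)
  linarith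

/-- If `f` is spatially 1-periodic and has time derivative `f'`, then `f'` is periodic. -/
lemma periodic_t_deriv (f f' : ℝ → ℝ → ℝ)
    (hp : ∀ t x : ℝ, f t (x + 1) = f t x)
    (hd : ∀ t x : ℝ, HasDerivAt (fun s => f s x) (f' t x) t) :
    ∀ t x : ℝ, f' t (x + 1) = f' t x := by
  intro t x
  have h1 : HasDerivAt (fun s => f s (x + 1)) (f' t (x + 1)) t := hd t (x + 1)
  have h2 : HasDerivAt (fun s => f s x) (f' t (x + 1)) t := by
    have hfe : (fun s => f s (x + 1)) = fun s => f s x := funext fun s => hp s x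
    rwa [hfe] at h1
  exact h2.unique (hd t x)

/-- Energy conservation for the μ-Hunter–Saxton system: for a smooth 1-periodic solution of
`−u_{txx} = 2μ(u)u_x − 2u_x u_{xx} − u u_{xxx} + ρρ_x − γ₁ u_{xxx}`,
`ρ_t = (ρu)_x + 2γ₂ ρ_x`, the energy `E(t) = ∫_S (u_x² + ρ²) dx` is conserved. -/
theorem energy_conservation
    (γ₁ γ₂ : ℝ) (u ux uxx uxxx utx utxx ρ ρt ρx : ℝ → ℝ → ℝ)
    -- joint continuity (smoothness in the relevant variables)
    (hcu : Continuous (Function.uncurry u))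
    (hcux : Continuous (Function.uncurry ux))
    (hcuxx : Continuous (Function.uncurry uxx))
    (hcuxxx : Continuous (Function.uncurry uxxx))
    (hcutx : Continuous (Function.uncurry utx))
    (hcutxx : Continuous (Function.uncurry utxx))
    (hcρ : Continuous (Function.uncurry ρ))
    (hcρt : Continuous (Function.uncurry ρt))
    (hcρx : Continuous (Function.uncurry ρx))
    -- spatial periodicity
    (hpu : ∀ t x : ℝ, u t (x + 1) = u t x)
    (hpρ : ∀ t x : ℝ, ρ t (x + 1) = ρ t x)
    -- derivative relations
    (hux : ∀ t x : ℝ, HasDerivAt (fun y => u t y) (ux t x) x)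
    (huxx : ∀ t x : ℝ, HasDerivAt (fun y => ux t y) (uxx t x) x)
    (huxxx : ∀ t x : ℝ, HasDerivAt (fun y => uxx t y) (uxxx t x) x)
    (hutx : ∀ t x : ℝ, HasDerivAt (fun s => ux s x) (utx t x) t)
    (hutxx : ∀ t x : ℝ, HasDerivAt (fun y => utx t y) (utxx t x) x)
    (hρt : ∀ t x : ℝ, HasDerivAt (fun s => ρ s x) (ρt t x) t)
    (hρx : ∀ t x : ℝ, HasDerivAt (fun y => ρ t y) (ρx t x) x)
    -- the μ-Hunter–Saxton system
    (hpde1 : ∀ t x : ℝ,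
      -(utxx t x) = 2 * (∫ y in (0:ℝ)..1, u t y) * ux t x
        - 2 * ux t x * uxx t x - u t x * uxxx t x + ρ t x * ρx t x - γ₁ * uxxx t x)
    (hpde2 : ∀ t x : ℝ,
      ρt t x = ρx t x * u t x + ρ t x * ux t x + 2 * γ₂ * ρx t x) :
    ∀ t : ℝ,
      HasDerivAt (fun s => ∫ x in (0:ℝ)..1, ((ux s x) ^ 2 + (ρ s x) ^ 2)) 0 t := by
  intro t
  -- continuity of slices
  have slice_cont : ∀ (f : ℝ → ℝ → ℝ), Continuous (Function.uncurry f) →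
      ∀ s : ℝ, Continuous (fun x => f s x) := by
    intro f hf s
    exact hf.comp (continuous_const.prodMk continuous_id)
  have slice_cont_t : ∀ (f : ℝ → ℝ → ℝ), Continuous (Function.uncurry f) →
      ∀ x : ℝ, Continuous (fun s => f s x) := by
    intro f hf x
    exact hf.comp (continuous_id.prodMk continuous_const)
  -- periodicity of derived quantities
  have hpux : ∀ s x : ℝ, ux s (x + 1) = ux s x := periodic_x_deriv u ux hpu hux
  have hpuxx : ∀ s x : ℝ, uxx s (x + 1) = uxx s x := periodic_x_deriv ux uxx hpux huxx
  have hputx : ∀ s x : ℝ, utx s (x + 1) = utx s x := periodic_t_deriv ux utx hpux hutx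
  -- the time derivative of the integrand
  set F' : ℝ → ℝ → ℝ := fun s x => 2 * ux s x * utx s x + 2 * ρ s x * ρt s x with hF'
  have hcF' : Continuous (Function.uncurry F') := by
    simp only [hF', Function.uncurry]
    fun_prop
  -- Step 1: differentiate under the integral sign
  have key : HasDerivAt (fun s => ∫ x in (0:ℝ)..1, ((ux s x) ^ 2 + (ρ s x) ^ 2))
      (∫ x in (0:ℝ)..1, F' t x) t := by
    -- bound on the compact set
    obtain ⟨C, hC⟩ : ∃ C, ∀ p ∈ (Metric.closedBall t 1 ×ˢ Set.uIcc (0:ℝ) 1),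
        ‖Function.uncurry F' p‖ ≤ C :=
      ((isCompact_closedBall t 1).prod isCompact_uIcc).exists_bound_of_continuousOn
        hcF'.continuousOn
    have := intervalIntegral.hasDerivAt_integral_of_dominated_loc_of_deriv_le
      (F := fun s x => (ux s x) ^ 2 + (ρ s x) ^ 2) (F' := F')
      (μ := volume) (a := (0:ℝ)) (b := 1) (x₀ := t) (bound := fun _ => C)
      (s := Metric.ball t 1) (Metric.ball_mem_nhds t one_pos)
      (Filter.Eventually.of_forall fun s =>
        (((slice_cont ux hcux s).pow 2).add ((slice_cont ρ hcρ s).pow 2)).aestronglyMeasurable)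
      ((((slice_cont ux hcux t).pow 2).add
        ((slice_cont ρ hcρ t).pow 2)).intervalIntegrable 0 1)
      ((slice_cont F' hcF' t).aestronglyMeasurable)
      (Filter.Eventually.of_forall fun x hx s hs => by
        exact hC (s, x) ⟨Metric.ball_subset_closedBall hs, Set.uIoc_subset_uIcc hx⟩)
      (intervalIntegrable_const)
      (Filter.Eventually.of_forall fun x _ s _ => by
        have h1 := (hutx s x).pow 2
        have h2 := (hρt s x).pow 2
        have := h1.add h2
        simpa [hF', mul_assoc, pow_one, Pi.add_def, Pi.pow_def] using this)
    exact this.2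
  -- Step 2: the integral of F' t vanishes.
  -- F' t = ∂ₓ (2·G) where G is periodic
  set μt : ℝ := ∫ y in (0:ℝ)..1, u t y with hμt
  set G : ℝ → ℝ := fun x => 2 * (u t x * utx t x + μt * (u t x) ^ 2 - (u t x) ^ 2 * uxx t x
      + u t x * (ρ t x) ^ 2 - γ₁ * (u t x * uxx t x - (ux t x) ^ 2 / 2)
      + γ₂ * (ρ t x) ^ 2) with hG
  have hGderiv : ∀ x : ℝ, HasDerivAt G (F' t x) x := by
    intro x
    have h1 : HasDerivAt (fun y => 2 * (u t y * utx t y + μt * (u t y) ^ 2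
        - (u t y) ^ 2 * uxx t y + u t y * (ρ t y) ^ 2
        - γ₁ * (u t y * uxx t y - (ux t y) ^ 2 / 2) + γ₂ * (ρ t y) ^ 2))
        (2 * ((ux t x * utx t x + u t x * utxx t x)
          + μt * (2 * (u t x) ^ 1 * ux t x)
          - ((2 * (u t x) ^ 1 * ux t x) * uxx t x + (u t x) ^ 2 * uxxx t x)
          + (ux t x * (ρ t x) ^ 2 + u t x * (2 * (ρ t x) ^ 1 * ρx t x))
          - γ₁ * ((ux t x * uxx t x + u t x * uxxx t x) - (2 * (ux t x) ^ 1 * uxx t x) / 2)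
          + γ₂ * (2 * (ρ t x) ^ 1 * ρx t x))) x := by
      exact (((((((hux t x).mul (hutxx t x)).add
        (((hux t x).pow 2).const_mul μt)).sub
        (((hux t x).pow 2).mul (huxxx t x))).add
        ((hux t x).mul ((hρx t x).pow 2))).sub
        ((((hux t x).mul (huxxx t x)).sub (((huxx t x).pow 2).div_const 2)).const_mul γ₁)).add
        (((hρx t x).pow 2).const_mul γ₂)).const_mul 2
    have heq : (2 * ((ux t x * utx t x + u t x * utxx t x)
          + μt * (2 * (u t x) ^ 1 * ux t x)
          - ((2 * (u t x) ^ 1 * ux t x) * uxx t x + (u t x) ^ 2 * uxxx t x)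
          + (ux t x * (ρ t x) ^ 2 + u t x * (2 * (ρ t x) ^ 1 * ρx t x))
          - γ₁ * ((ux t x * uxx t x + u t x * uxxx t x) - (2 * (ux t x) ^ 1 * uxx t x) / 2)
          + γ₂ * (2 * (ρ t x) ^ 1 * ρx t x))) = F' t x := by
      have e1 := hpde1 t x
      have e2 := hpde2 t x
      rw [hF']
      rw [hμt] at *
      linear_combination (-2 * u t x) * e1 + (-2 * ρ t x) * e2
    rw [hG]
    exact heq ▸ h1
  have hint : ∫ x in (0:ℝ)..1, F' t x = 0 := by
    have : ∫ x in (0:ℝ)..1, F' t x = G 1 - G 0 := by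
      apply intervalIntegral.integral_eq_sub_of_hasDerivAt
      · intro x _
        exact hGderiv x
      · exact (slice_cont F' hcF' t).intervalIntegrable 0 1
    rw [this]
    have hGper : G 1 = G 0 := by
      have e : (1 : ℝ) = 0 + 1 := by norm_num
      simp only [hG]
      rw [e, hpu t 0, hpρ t 0, hpux t 0, hpuxx t 0, hputx t 0]
    linarith [hGper]
  rw [hint] at key
  exact key
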